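/- Let p ≥ 13 be a prime with p ≡ 1 mod 3. Define u : ℕ → ℚ by u₁ = u₂ = 0, u₃ = 3/16, u₄ = u₅ = 0, and u_n = ((2n−7)·(2n−9))/((2n+2)·(2n)) · u_{n−3} for all n ≥ 6. Then the p-adic valuation of u_{(p+5)/2} is 0; in particular u_{(p+5)/2} ≠ 0. -/
import Mathlib


theorem psi_at_j_zero_nonzero_mod_p
    (p : ℕ) (hp : p.Prime) (hp13 : 13 ≤ p) (hp3 : p % 3 = 1)
    (u : ℕ → ℚ)
    (h1 : u 1 = 0) (h2 : u 2 = 0) (h3 : u 3 = 3 / 16) (h4 : u 4 = 0) (h5 : u 5 = 0)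
    (hrec : ∀ n : ℕ, 6 ≤ n →
      u n = (((2 * n - 7 : ℕ) : ℚ) * ((2 * n - 9 : ℕ) : ℚ))
        / (((2 * n + 2 : ℕ) : ℚ) * ((2 * n : ℕ) : ℚ)) * u (n - 3)) :
    padicValRat p (u ((p + 5) / 2)) = 0 ∧ u ((p + 5) / 2) ≠ 0 := by
  haveI : Fact p.Prime := ⟨hp⟩
  have hp2 : p % 2 = 1 := Nat.odd_iff.mp (hp.odd_of_ne_two (by omega))
  have hp6 : p % 6 = 1 := by omega
  -- key valuation fact for natural numbers
  have hval : ∀ m : ℕ, 0 < m → m % 6 ≠ 1 → m < 2 * p →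
      padicValRat p (m : ℚ) = 0 ∧ ((m : ℚ) ≠ 0) := by
    intro m hm h6 hlt
    have hnd : ¬ p ∣ m := by
      rintro ⟨c, rfl⟩
      have hc2 : c < 2 := by nlinarith
      interval_cases c <;> omega
    refine ⟨?_, by exact_mod_cast hm.ne'⟩
    rw [padicValRat.of_nat]
    exact_mod_cast padicValNat.eq_zero_of_not_dvd hnd
  have main : ∀ k : ℕ, 3 * (k + 1) ≤ (p + 5) / 2 →
      u (3 * (k + 1)) ≠ 0 ∧ padicValRat p (u (3 * (k + 1))) = 0 := by
    intro k
    induction k with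
    | zero =>
      intro _
      have h316 : u 3 = ((3 : ℕ) : ℚ) / ((16 : ℕ) : ℚ) := by rw [h3]; norm_num
      have v3 := hval 3 (by norm_num) (by norm_num) (by omega)
      have v16 := hval 16 (by norm_num) (by norm_num) (by omega)
      have : (3 : ℕ) * (0 + 1) = 3 := by norm_num
      rw [this, h316]
      constructor
      · exact div_ne_zero v3.2 v16.2
      · rw [padicValRat.div v3.2 v16.2, v3.1, v16.1]; ring
    | succ k ih =>
      intro hle
      set n := 3 * (k + 1 + 1) with hn
      have hn6 : 6 ≤ n := by omega
      have hprev := ih (by omega)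
      have hn3 : n - 3 = 3 * (k + 1) := by omega
      have h2n : 2 * n ≤ p + 5 := by omega
      have va := hval (2 * n - 7) (by omega) (by omega) (by omega)
      have vb := hval (2 * n - 9) (by omega) (by omega) (by omega)
      have vc := hval (2 * n + 2) (by omega) (by omega) (by omega)
      have vd := hval (2 * n) (by omega) (by omega) (by omega)
      have hun := hrec n hn6
      rw [hn3] at hun
      have hnum : (((2 * n - 7 : ℕ) : ℚ) * ((2 * n - 9 : ℕ) : ℚ)) ≠ 0 :=
        mul_ne_zero va.2 vb.2
      have hden : (((2 * n + 2 : ℕ) : ℚ) * ((2 * n : ℕ) : ℚ)) ≠ 0 :=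
        mul_ne_zero vc.2 vd.2
      have hfrac := div_ne_zero hnum hden
      have hune : u n ≠ 0 := by rw [hun]; exact mul_ne_zero hfrac hprev.1
      refine ⟨hune, ?_⟩
      rw [hun, padicValRat.mul hfrac hprev.1, padicValRat.div hnum hden,
        padicValRat.mul va.2 vb.2, padicValRat.mul vc.2 vd.2,
        va.1, vb.1, vc.1, vd.1, hprev.2]
      ring
  have hN : (p + 5) / 2 = 3 * ((p + 5) / 6 - 1 + 1) := by omega
  rw [hN]
  have := main ((p + 5) / 6 - 1) (by omega)
  exact ⟨this.2, this.1⟩
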